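/- For every topological space X, every Fréchet space Y, and every ordinal α with 2 ≤ α ≤ ω₁, the function space B_α(X, Y) is a Baire space. -/

import Mathlib

open Set Filter Topology Ordinal TopologicalSpace

/-- A map `φ : K → M` is *almost open* if the image of every nonempty open set
has nonempty interior. -/
def AlmostOpenMap {K M : Type*} [TopologicalSpace K] [TopologicalSpace M] (φ : K → M) : Prop :=
  ∀ V : Set K, IsOpen V → V.Nonempty → (interior (φ '' V)).Nonempty

/-- The Baire class `B_α(X,Y)`: `B_0(X,Y)` is the set of continuous functions, and for `α > 0`,
`B_α(X,Y)` is the set of pointwise limits of sequences from `C(X,Y) ∪ ⋃_{β<α} B_β(X,Y)`. -/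
noncomputable def BaireClass (X Y : Type*) [TopologicalSpace X] [TopologicalSpace Y]
    (α : Ordinal.{0}) : Set (X → Y) :=
  if α = 0 then {f | Continuous f}
  else {f | ∃ g : ℕ → X → Y,
    (∀ n, Continuous (g n) ∨ ∃ β, ∃ _ : β < α, g n ∈ BaireClass X Y β) ∧
    ∀ x, Filter.Tendsto (fun n => g n x) Filter.atTop (nhds (f x))}
termination_by α

/-- `B_α(X,Y)` for `0 ≤ α ≤ ω₁`, where `B_{ω₁}(X,Y) = ⋃_{β<ω₁} B_β(X,Y)`. -/
noncomputable def BaireFun (X Y : Type*) [TopologicalSpace X] [TopologicalSpace Y]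
    (α : Ordinal.{0}) : Set (X → Y) :=
  if α = ω_ 1 then ⋃ β ∈ Set.Iio (ω_ 1 : Ordinal.{0}), BaireClass X Y β
  else BaireClass X Y α

/-- A (real) Fréchet space: a completely metrizable locally convex topological
vector space over `ℝ`. -/
def IsFrechetTVS (Y : Type*) [AddCommGroup Y] [Module ℝ Y] [t : TopologicalSpace Y] : Prop :=
  IsTopologicalAddGroup Y ∧ ContinuousSMul ℝ Y ∧ LocallyConvexSpace ℝ Y ∧
  ∃ m : MetricSpace Y, m.toPseudoMetricSpace.toUniformSpace.toTopologicalSpace = t ∧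
    @CompleteSpace Y m.toPseudoMetricSpace.toUniformSpace

/-! ### Auxiliary lemmas on Baire classes -/

section BC
variable {X Y : Type*} [TopologicalSpace X] [TopologicalSpace Y]

lemma bc_zero : BaireClass X Y 0 = {f | Continuous f} := by rw [BaireClass]; simp

lemma bc_pos {α : Ordinal.{0}} (h : α ≠ 0) : BaireClass X Y α = {f | ∃ g : ℕ → X → Y,
    (∀ n, Continuous (g n) ∨ ∃ β, ∃ _ : β < α, g n ∈ BaireClass X Y β) ∧
    ∀ x, Filter.Tendsto (fun n => g n x) Filter.atTop (nhds (f x))} := by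
  rw [BaireClass]; simp [h]

lemma bc_mono {α α' : Ordinal.{0}} (h : α ≤ α') : BaireClass X Y α ⊆ BaireClass X Y α' := by
  rcases eq_or_lt_of_le h with rfl | hlt
  · exact subset_rfl
  intro f hf
  have hα' : α' ≠ 0 := ((zero_le (a := α)).trans_lt hlt).ne'
  rw [bc_pos hα']
  by_cases h0 : α = 0
  · subst h0
    exact ⟨fun _ => f, fun n => Or.inl (by rw [bc_zero] at hf; exact hf),
      fun x => tendsto_const_nhds⟩
  · exact ⟨fun _ => f, fun n => Or.inr ⟨α, hlt, hf⟩, fun x => tendsto_const_nhds⟩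

lemma bc_of_continuous {α : Ordinal.{0}} {f : X → Y} (hf : Continuous f) :
    f ∈ BaireClass X Y α :=
  bc_mono (zero_le (a := α)) (by rw [bc_zero]; exact hf)

lemma bc_level {α : Ordinal.{0}} (h0 : α ≠ 0) {u : X → Y}
    (h : Continuous u ∨ ∃ β, ∃ _ : β < α, u ∈ BaireClass X Y β) :
    ∃ β, β < α ∧ u ∈ BaireClass X Y β := by
  rcases h with h | ⟨β, hβ, hu⟩
  · exact ⟨0, pos_iff_ne_zero.2 h0, bc_of_continuous h⟩
  · exact ⟨β, hβ, hu⟩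

lemma bc_comb {Z : Type*} [AddCommGroup Z] [Module ℝ Z] [TopologicalSpace Z]
    [ContinuousAdd Z] [ContinuousSMul ℝ Z] :
    ∀ α : Ordinal.{0}, ∀ ψ : X → ℝ, ∀ f g : X → Z, ψ ∈ BaireClass X ℝ α →
    f ∈ BaireClass X Z α → g ∈ BaireClass X Z α →
    (fun x => g x + ψ x • f x) ∈ BaireClass X Z α := by
  intro α
  induction α using Ordinal.induction with
  | _ α IH =>
  intro ψ f g hψ hf hg
  by_cases h0 : α = 0
  · subst h0; rw [bc_zero] at *
    exact Continuous.add hg (Continuous.smul hψ hf)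
  · rw [bc_pos h0] at hψ hf hg ⊢
    obtain ⟨P, hP, hPt⟩ := hψ
    obtain ⟨F, hF, hFt⟩ := hf
    obtain ⟨G, hG, hGt⟩ := hg
    refine ⟨fun n x => G n x + P n x • F n x, fun n => ?_,
      fun x => (hGt x).add ((hPt x).smul (hFt x))⟩
    obtain ⟨β1, hβ1, h1⟩ := bc_level h0 (hP n)
    obtain ⟨β2, hβ2, h2⟩ := bc_level h0 (hF n)
    obtain ⟨β3, hβ3, h3⟩ := bc_level h0 (hG n)
    refine Or.inr ⟨max (max β1 β2) β3, max_lt (max_lt hβ1 hβ2) hβ3, ?_⟩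
    exact IH _ (max_lt (max_lt hβ1 hβ2) hβ3) (P n) (F n) (G n)
      (bc_mono (le_max_of_le_left (le_max_left _ _)) h1)
      (bc_mono (le_max_of_le_left (le_max_right _ _)) h2)
      (bc_mono (le_max_right _ _) h3)

end BC

/-! ### Bump functions and interpolation in completely regular spaces -/

section T35
variable {X : Type*} [TopologicalSpace X] [T35Space X]

open Classical in
lemma bump (A B : Finset X) (hd : ∀ x ∈ A, x ∉ B) :
    ∃ u : X → ℝ, Continuous u ∧ (∀ x ∈ A, u x = 1) ∧ (∀ x ∈ B, u x = 0) ∧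
      ∀ x, u x ∈ Icc (0:ℝ) 1 := by
  have h : ∀ a : X, ∃ e : X → ℝ, Continuous e ∧ (a ∈ A → e a = 1) ∧ (∀ x ∈ B, e x = 0) ∧
      ∀ x, e x ∈ Icc (0:ℝ) 1 := by
    intro a
    by_cases ha : a ∈ A
    · obtain ⟨f, cf, hf0, hf1⟩ := CompletelyRegularSpace.completely_regular a (B : Set X)
        (B.finite_toSet.isClosed) (by simpa using hd a ha)
      refine ⟨fun z => 1 - (f z : ℝ), continuous_const.sub (continuous_subtype_val.comp cf),
        fun _ => by simp [hf0], fun x hx => ?_, fun x => ?_⟩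
      · have : f x = 1 := hf1 (by simpa using hx)
        simp [this]
      · have h1 := (f x).2
        simp only [unitInterval, Set.mem_Icc] at h1 ⊢
        constructor <;> linarith [h1.1, h1.2]
    · exact ⟨fun _ => 0, continuous_const, fun h => absurd h ha, fun _ _ => rfl,
        fun _ => ⟨le_refl _, zero_le_one⟩⟩
  choose e he1 he2 he3 he4 using h
  refine ⟨fun z => min 1 (∑ a ∈ A, e a z),
    continuous_const.min (continuous_finset_sum _ fun a _ => he1 a), fun b hb => ?_,
    fun x hx => ?_, fun x => ?_⟩
  · have h1 : (1:ℝ) ≤ ∑ a ∈ A, e a b := by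
      have := Finset.single_le_sum (f := fun a => e a b) (fun a _ => (he4 a b).1) hb
      simpa [he2 b hb] using this
    simp only []
    exact min_eq_left h1
  · have h0 : ∀ a ∈ A, e a x = 0 := fun a _ => he3 a x hx
    simp only []
    rw [Finset.sum_congr rfl h0]; simp
  · constructor
    · exact le_min zero_le_one (Finset.sum_nonneg fun a _ => (he4 a x).1)
    · exact min_le_left _ _

open Classical in
lemma interp {Y : Type*} [AddCommGroup Y] [Module ℝ Y] [TopologicalSpace Y]
    [ContinuousAdd Y] [ContinuousSMul ℝ Y] (A : Finset X) (τ : X → Y) :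
    ∃ w : X → Y, Continuous w ∧ ∀ x ∈ A, w x = τ x := by
  have h : ∀ a : X, ∃ e : X → ℝ, Continuous e ∧ (a ∈ A → e a = 1) ∧
      (∀ x ∈ A.erase a, e x = 0) := by
    intro a
    obtain ⟨u, hu1, hu2, hu3, _⟩ := bump {a} (A.erase a)
      (by intro x hx; simp only [Finset.mem_singleton] at hx; subst hx;
          exact fun hc => (Finset.mem_erase.1 hc).1 rfl)
    exact ⟨u, hu1, fun _ => hu2 a (Finset.mem_singleton_self a), hu3⟩
  choose e he1 he2 he3 using h
  refine ⟨fun z => ∑ a ∈ A, e a z • τ a,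
    continuous_finset_sum _ fun a _ => (he1 a).smul continuous_const, fun b hb => ?_⟩
  simp only []
  rw [Finset.sum_eq_single b]
  · rw [he2 b hb, one_smul]
  · intro a ha hab
    rw [he3 a b (Finset.mem_erase.2 ⟨fun h => hab h.symm, hb⟩), zero_smul]
  · intro h; exact absurd hb h

end T35

/-! ### Baire-one partition functions -/

section Phi
variable {X : Type*} [TopologicalSpace X]

/-- Partial maxima of the tail `u (k+1), u (k+2), ...`. -/
noncomputable def pmax (u : ℕ → X → ℝ) (k : ℕ) : ℕ → X → ℝ
  | 0 => u (k + 1)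
  | (M + 1) => fun x => max (pmax u k M x) (u (k + 1 + (M + 1)) x)

lemma pmax_continuous {u : ℕ → X → ℝ} (hc : ∀ k, Continuous (u k)) (k M : ℕ) :
    Continuous (pmax u k M) := by
  induction M with
  | zero => exact hc _
  | succ M ih => exact ih.max (hc _)

omit [TopologicalSpace X] in
lemma pmax_mono {u : ℕ → X → ℝ} (k : ℕ) (x : X) : Monotone (fun M => pmax u k M x) := by
  apply monotone_nat_of_le_succ
  intro M; exact le_max_left _ _

omit [TopologicalSpace X] in
lemma pmax_le_one {u : ℕ → X → ℝ} (h01 : ∀ k x, u k x ∈ Icc (0:ℝ) 1) (k M : ℕ) (x : X) :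
    pmax u k M x ≤ 1 := by
  induction M with
  | zero => exact (h01 _ x).2
  | succ M ih => exact max_le ih (h01 _ x).2

omit [TopologicalSpace X] in
lemma pmax_nonneg {u : ℕ → X → ℝ} (h01 : ∀ k x, u k x ∈ Icc (0:ℝ) 1) (k M : ℕ) (x : X) :
    0 ≤ pmax u k M x := by
  induction M with
  | zero => exact (h01 _ x).1
  | succ M ih => exact le_trans ih (le_max_left _ _)

omit [TopologicalSpace X] in
lemma le_pmax {u : ℕ → X → ℝ} (k j : ℕ) (x : X) : u (k + 1 + j) x ≤ pmax u k j x := by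
  cases j with
  | zero => simp [pmax]
  | succ j => exact le_max_right _ _

omit [TopologicalSpace X] in
lemma pmax_eq_zero {u : ℕ → X → ℝ} {k : ℕ} {x : X} (h : ∀ m, k < m → u m x = 0) (M : ℕ) :
    pmax u k M x = 0 := by
  induction M with
  | zero => exact h _ (Nat.lt_succ_self k)
  | succ M ih =>
    have h2 : u (k + 1 + (M + 1)) x = 0 := h _ (by omega)
    simp [pmax, ih, h2]

lemma phi_exists (u : ℕ → X → ℝ) (hc : ∀ k, Continuous (u k))
    (h01 : ∀ k x, u k x ∈ Icc (0:ℝ) 1) :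
    ∃ φ : ℕ → X → ℝ, (∀ k, φ k ∈ BaireClass X ℝ 1) ∧
      (∀ k x, φ k x ∈ Icc (0:ℝ) 1) ∧
      (∀ k x, u k x = 1 → (∀ m, k < m → u m x = 0) → φ k x = 1) ∧
      (∀ x k1 k2, k1 < k2 → φ k1 x ≠ 0 → φ k2 x ≠ 0 → False) := by
  set v : ℕ → X → ℝ := fun k x => ⨆ M, pmax u k M x with hv
  have hbdd : ∀ k x, BddAbove (Set.range fun M => pmax u k M x) := by
    intro k x; exact ⟨1, by rintro y ⟨M, rfl⟩; exact pmax_le_one h01 k M x⟩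
  have hvle : ∀ k M x, pmax u k M x ≤ v k x := fun k M x => le_ciSup (hbdd k x) M
  have hvnn : ∀ k x, 0 ≤ v k x := fun k x =>
    le_trans (pmax_nonneg h01 k 0 x) (hvle k 0 x)
  have hvge : ∀ k m x, k < m → u m x ≤ v k x := by
    intro k m x hkm
    have : m = k + 1 + (m - (k+1)) := by omega
    rw [this]
    exact le_trans (le_pmax k (m - (k+1)) x) (hvle k _ x)
  have hvtendsto : ∀ k x, Tendsto (fun M => pmax u k M x) atTop (𝓝 (v k x)) :=
    fun k x => tendsto_atTop_ciSup (pmax_mono k x) (hbdd k x)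
  have hvzero : ∀ k x, (∀ m, k < m → u m x = 0) → v k x = 0 := by
    intro k x h
    have : (fun M => pmax u k M x) = fun _ => 0 := funext fun M => pmax_eq_zero h M
    rw [hv]; simp only [this]; exact ciSup_const
  refine ⟨fun k x => max 0 (2 * u k x - 1 - 2 * v k x), ?_, ?_, ?_, ?_⟩
  · intro k
    rw [bc_pos one_ne_zero]
    refine ⟨fun M x => max 0 (2 * u k x - 1 - 2 * pmax u k M x), fun M => Or.inl ?_, fun x => ?_⟩
    · apply continuous_const.max
      exact ((continuous_const.mul (hc k)).sub continuous_const).sub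
        (continuous_const.mul (pmax_continuous hc k M))
    · exact tendsto_const_nhds.max
        ((tendsto_const_nhds.sub ((hvtendsto k x).const_mul 2)))
  · intro k x
    constructor
    · exact le_max_left _ _
    · apply max_le zero_le_one
      have := (h01 k x).2; have := hvnn k x; linarith
  · intro k x h1 h2
    simp only []
    rw [hvzero k x h2, h1]; norm_num
  · intro x k1 k2 h12 hn1 hn2
    have key : ∀ k, max 0 (2 * u k x - 1 - 2 * v k x) ≠ 0 → 1/2 + v k x < u k x := by
      intro k hk
      by_contra hle
      push_neg at hle
      exact hk (max_eq_left (by linarith))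
    have h1 := key k1 hn1
    have h2 := key k2 hn2
    have h3 := hvge k1 k2 x h12
    have h4 := hvnn k2 x
    have h5 := (h01 k1 x).2
    linarith
end Phi

/-! ### Neighborhood bases in function spaces over a metric codomain -/

section NB
variable {X Y : Type*} [TopologicalSpace X] [MetricSpace Y]

set_option maxHeartbeats 1000000 in
lemma nbhd_basis (S : Set (X → Y)) (U : Set ↥S) (hU : IsOpen U) (p : ↥S) (hp : p ∈ U) :
    ∃ (G : Finset X) (ε : ℝ), 0 < ε ∧ ∀ g (hg : g ∈ S),
      (∀ x ∈ G, dist (g x) (p.1 x) < 2 * ε) → (⟨g, hg⟩ : ↥S) ∈ U := by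
  obtain ⟨U', hU', hUeq⟩ := isOpen_induced_iff.1 hU
  have hpU' : p.1 ∈ U' := by rw [← hUeq] at hp; exact hp
  obtain ⟨I, u, h1, h2⟩ := isOpen_pi_iff.1 hU' p.1 hpU'
  have hε : ∀ x : X, ∃ ε : ℝ, 0 < ε ∧ (x ∈ I → Metric.ball (p.1 x) ε ⊆ u x) := by
    intro x
    by_cases hx : x ∈ I
    · obtain ⟨ε, hε, hball⟩ := Metric.isOpen_iff.1 (h1 x hx).1 (p.1 x) (h1 x hx).2
      exact ⟨ε, hε, fun _ => hball⟩
    · exact ⟨1, one_pos, fun h => absurd h hx⟩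
  choose εf hεf hball using hε
  by_cases hI : I.Nonempty
  · have hpos : 0 < I.inf' hI εf := (Finset.lt_inf'_iff hI).2 fun i _ => hεf i
    refine ⟨I, I.inf' hI εf / 2, by linarith, fun g hg hdist => ?_⟩
    have : g ∈ U' := by
      apply h2
      rw [Set.mem_pi]
      intro x hx
      rw [Finset.mem_coe] at hx
      apply hball x hx
      have h3 := hdist x hx
      have h4 : I.inf' hI εf ≤ εf x := Finset.inf'_le εf hx
      rw [Metric.mem_ball]
      calc dist (g x) (p.1 x) < 2 * (I.inf' hI εf / 2) := h3
        _ = I.inf' hI εf := by ring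
        _ ≤ εf x := h4
    rw [← hUeq]; exact this
  · refine ⟨I, 1, one_pos, fun g hg hdist => ?_⟩
    rw [Finset.not_nonempty_iff_eq_empty] at hI
    subst hI
    have : g ∈ U' := by
      apply h2
      rw [Set.mem_pi]
      simp
    rw [← hUeq]; exact this

lemma ball_open (S : Set (X → Y)) (f : X → Y) (H : Finset X) (δ : ℝ) :
    IsOpen {q : ↥S | ∀ x ∈ H, dist (q.1 x) (f x) < δ} := by
  have : {q : ↥S | ∀ x ∈ H, dist (q.1 x) (f x) < δ}
      = ⋂ x ∈ H, {q : ↥S | dist (q.1 x) (f x) < δ} := by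
    ext q; simp
  rw [this]
  apply isOpen_biInter_finset
  intro x _
  exact isOpen_lt (Continuous.dist ((continuous_apply x).comp continuous_subtype_val)
    continuous_const) continuous_const

end NB

/-! ### The main theorem -/

section Main
variable {X : Type*} [TopologicalSpace X] [T35Space X]
variable {Y : Type*} [AddCommGroup Y] [Module ℝ Y] [MetricSpace Y] [CompleteSpace Y]
  [IsTopologicalAddGroup Y] [ContinuousSMul ℝ Y]

set_option maxHeartbeats 2000000 in
theorem main_baire (α : Ordinal.{0}) (hα2 : 2 ≤ α) (hα : α ≤ ω_ 1) :
    BaireSpace ↥(BaireFun X Y α) := by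
  classical
  have h20 : (2 : Ordinal.{0}) ≠ 0 := by exact_mod_cast (by norm_num : (2:ℕ) ≠ 0)
  have h12 : (1 : Ordinal.{0}) < 2 := by exact_mod_cast (by norm_num : (1:ℕ) < 2)
  set S : Set (X → Y) := BaireFun X Y α with hSdef
  have hmemS : ∀ f ∈ S, ∃ γ : Ordinal.{0}, 2 ≤ γ ∧ f ∈ BaireClass X Y γ ∧
      BaireClass X Y γ ⊆ S := by
    intro f hf
    by_cases hω : α = ω_ 1
    · rw [hSdef, BaireFun, if_pos hω] at hf
      simp only [Set.mem_iUnion, Set.mem_Iio] at hf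
      obtain ⟨β, hβ, hfβ⟩ := hf
      refine ⟨max β 2, le_max_right _ _, bc_mono (le_max_left _ _) hfβ, ?_⟩
      intro g hg
      rw [hSdef, BaireFun, if_pos hω]
      simp only [Set.mem_iUnion, Set.mem_Iio]
      exact ⟨max β 2, max_lt hβ
        (lt_of_lt_of_le (Ordinal.nat_lt_omega0 2) (Ordinal.omega0_le_omega 1)), hg⟩
    · rw [hSdef, BaireFun, if_neg hω] at hf
      refine ⟨α, hα2, hf, ?_⟩
      intro g hg
      rw [hSdef, BaireFun, if_neg hω]
      exact hg
  constructor
  intro U hUo hUd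
  rw [dense_iff_inter_open]
  rintro W hWo ⟨p0, hp0⟩
  -- the inductive step
  have step : ∀ (n : ℕ) (f : X → Y) (G : Finset X) (ε : ℝ), f ∈ S → 0 < ε →
      ∃ (f' : X → Y) (G' : Finset X) (ε' : ℝ), f' ∈ S ∧ 0 < ε' ∧ ε' ≤ ε / 2 ∧ G ⊆ G' ∧
        (∀ x ∈ G, dist (f' x) (f x) < ε / 2) ∧
        ∀ g (hg : g ∈ S), (∀ x ∈ G', dist (g x) (f' x) < 2 * ε') →
          (⟨g, hg⟩ : ↥S) ∈ U n := by
    intro n f G ε hf hε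
    have hO : IsOpen {q : ↥S | ∀ x ∈ G, dist (q.1 x) (f x) < ε / 2} := ball_open S f G (ε/2)
    have hOne : {q : ↥S | ∀ x ∈ G, dist (q.1 x) (f x) < ε / 2}.Nonempty :=
      ⟨⟨f, hf⟩, fun x _ => by rw [dist_self]; linarith⟩
    obtain ⟨q, hqO, hqU⟩ := (hUd n).inter_open_nonempty _ hO hOne
    obtain ⟨G'', ε'', hε'', hball⟩ := nbhd_basis S (U n) (hUo n) q hqU
    refine ⟨q.1, G'' ∪ G, min ε'' (ε / 2), q.2, lt_min hε'' (by linarith),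
      min_le_right _ _, Finset.subset_union_right, fun x hx => hqO x hx, ?_⟩
    intro g hg hdist
    apply hball g hg
    intro x hx
    have := hdist x (Finset.mem_union_left _ hx)
    have hmin : min ε'' (ε / 2) ≤ ε'' := min_le_left _ _
    linarith
  choose sf sG sε h1 h2 h3 h4 h5 h6 using step
  -- initial data from `W`
  obtain ⟨G0, ε0, hε0, hW0⟩ := nbhd_basis S W hWo p0 hp0
  -- build the sequence
  let T := {s : (X → Y) × Finset X × ℝ // s.1 ∈ S ∧ 0 < s.2.2}
  let seq : ℕ → T := fun n => Nat.rec ⟨(p0.1, G0, ε0), p0.2, hε0⟩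
    (fun n s => ⟨(sf n s.1.1 s.1.2.1 s.1.2.2 s.2.1 s.2.2,
                  sG n s.1.1 s.1.2.1 s.1.2.2 s.2.1 s.2.2,
                  sε n s.1.1 s.1.2.1 s.1.2.2 s.2.1 s.2.2),
      h1 n s.1.1 s.1.2.1 s.1.2.2 s.2.1 s.2.2, h2 n s.1.1 s.1.2.1 s.1.2.2 s.2.1 s.2.2⟩) n
  obtain ⟨F, Gs, E, hFS, hEpos, hbase, hrel⟩ : ∃ (F : ℕ → X → Y) (Gs : ℕ → Finset X)
      (E : ℕ → ℝ), (∀ n, F n ∈ S) ∧ (∀ n, 0 < E n) ∧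
      (F 0 = p0.1 ∧ Gs 0 = G0 ∧ E 0 = ε0) ∧
      ∀ n, E (n+1) ≤ E n / 2 ∧ Gs n ⊆ Gs (n+1) ∧
        (∀ x ∈ Gs n, dist (F (n+1) x) (F n x) < E n / 2) ∧
        (∀ g (hg : g ∈ S), (∀ x ∈ Gs (n+1), dist (g x) (F (n+1) x) < 2 * E (n+1)) →
          (⟨g, hg⟩ : ↥S) ∈ U n) := by
    refine ⟨fun n => (seq n).1.1, fun n => (seq n).1.2.1, fun n => (seq n).1.2.2,
      fun n => (seq n).2.1, fun n => (seq n).2.2, ⟨rfl, rfl, rfl⟩, fun n => ⟨?_, ?_, ?_, ?_⟩⟩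
    · exact h3 n (seq n).1.1 (seq n).1.2.1 (seq n).1.2.2 (seq n).2.1 (seq n).2.2
    · exact h4 n (seq n).1.1 (seq n).1.2.1 (seq n).1.2.2 (seq n).2.1 (seq n).2.2
    · exact h5 n (seq n).1.1 (seq n).1.2.1 (seq n).1.2.2 (seq n).2.1 (seq n).2.2
    · exact h6 n (seq n).1.1 (seq n).1.2.1 (seq n).1.2.2 (seq n).2.1 (seq n).2.2
  obtain ⟨hbase1, hbase2, hbase3⟩ := hbase
  have hE2 : ∀ n, E (n+1) ≤ E n / 2 := fun n => (hrel n).1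
  have hGsub1 : ∀ n, Gs n ⊆ Gs (n+1) := fun n => (hrel n).2.1
  have hclose : ∀ n, ∀ x ∈ Gs n, dist (F (n+1) x) (F n x) < E n / 2 := fun n => (hrel n).2.2.1
  have hballn : ∀ n, ∀ g (hg : g ∈ S), (∀ x ∈ Gs (n+1), dist (g x) (F (n+1) x) < 2 * E (n+1)) →
      (⟨g, hg⟩ : ↥S) ∈ U n := fun n => (hrel n).2.2.2
  have hGmono : ∀ {n m : ℕ}, n ≤ m → Gs n ⊆ Gs m := by
    intro n m h
    induction m, h using Nat.le_induction with
    | base => exact subset_rfl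
    | succ m hm ih => exact ih.trans (hGsub1 m)
  have hEdecay : ∀ n j, E (n + j) ≤ E n / 2 ^ j := by
    intro n j
    induction j with
    | zero => simp
    | succ j ih =>
      have h' := hE2 (n + j)
      have hpow : (0:ℝ) < 2 ^ j := by positivity
      calc E (n + (j+1)) ≤ E (n + j) / 2 := h'
        _ ≤ (E n / 2 ^ j) / 2 := by linarith
        _ = E n / 2 ^ (j+1) := by rw [pow_succ, ← div_div]
  -- the key Cauchy estimate
  have hQ : ∀ n, ∀ x ∈ Gs n, ∀ m, n ≤ m → dist (F m x) (F n x) + E m ≤ E n := by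
    intro n x hx m hm
    induction m, hm using Nat.le_induction with
    | base => simp
    | succ m hm ih =>
      have hc := hclose m x (hGmono hm hx)
      have ht := dist_triangle (F (m+1) x) (F m x) (F n x)
      have he := hE2 m
      linarith
  -- the pointwise limit on ⋃ Gs
  have hconv : ∀ x, (∃ n, x ∈ Gs n) → ∃ L, Tendsto (fun m => F m x) atTop (𝓝 L) := by
    rintro x ⟨N, hxN⟩
    have hcau : CauchySeq (fun j => F (j + N) x) := by
      apply cauchySeq_of_le_geometric (1/2) (E N) (by norm_num)
      intro j
      have hx' : x ∈ Gs (j + N) := hGmono (Nat.le_add_left N j) hxN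
      have hc := hclose (j + N) x hx'
      have hd : E (j + N) ≤ E N / 2 ^ j := by
        have := hEdecay N j
        rwa [Nat.add_comm N j] at this
      have hp : E N * (1/2) ^ j = E N / 2 ^ j := by
        rw [one_div, inv_pow, div_eq_mul_inv]
      have hpos := hEpos (j + N)
      rw [hp]
      calc dist (F (j + N) x) (F (j + 1 + N) x)
          = dist (F (j + N + 1) x) (F (j + N) x) := by
            rw [show j + 1 + N = j + N + 1 from by omega, dist_comm]
        _ ≤ E (j + N) / 2 := le_of_lt hc
        _ ≤ E (j + N) := by linarith
        _ ≤ E N / 2 ^ j := hd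
    obtain ⟨L, hL⟩ := cauchySeq_tendsto_of_complete hcau
    exact ⟨L, (tendsto_add_atTop_iff_nat N).1 hL⟩
  set t : X → Y := fun x => limUnder atTop (fun m => F m x) with htdef
  have htt : ∀ x, (∃ n, x ∈ Gs n) → Tendsto (fun m => F m x) atTop (𝓝 (t x)) := by
    intro x hx
    obtain ⟨L, hL⟩ := hconv x hx
    have : t x = L := hL.limUnder_eq
    rw [this]
    exact hL
  have htdist : ∀ n, ∀ x ∈ Gs n, dist (t x) (F n x) ≤ E n := by
    intro n x hx
    apply le_of_tendsto ((htt x ⟨n, hx⟩).dist tendsto_const_nhds)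
    filter_upwards [eventually_ge_atTop n] with m hm
    have hq := hQ n x hx m hm
    have := hEpos m
    linarith
  -- the disjoint finite sets
  set Fs : ℕ → Finset X := fun k => Gs k \ (Finset.range k).biUnion Gs with hFsdef
  have hFsGs : ∀ k, Fs k ⊆ Gs k := fun k => Finset.sdiff_subset
  have hcover : ∀ n x, x ∈ Gs n → ∃ k, k ≤ n ∧ x ∈ Fs k := by
    intro n x hx
    have hex : ∃ k, x ∈ Gs k := ⟨n, hx⟩
    refine ⟨Nat.find hex, Nat.find_le hx, ?_⟩
    rw [hFsdef, Finset.mem_sdiff]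
    refine ⟨Nat.find_spec hex, ?_⟩
    intro hmem
    rw [Finset.mem_biUnion] at hmem
    obtain ⟨j, hj, hxj⟩ := hmem
    exact Nat.find_min hex (Finset.mem_range.1 hj) hxj
  -- bumps
  have hbump : ∀ k, ∃ u : X → ℝ, Continuous u ∧ (∀ x ∈ Fs k, u x = 1) ∧
      (∀ x ∈ (Finset.range k).biUnion Gs, u x = 0) ∧ ∀ x, u x ∈ Icc (0:ℝ) 1 := by
    intro k
    apply bump
    intro x hx
    exact (Finset.mem_sdiff.1 hx).2
  choose u hu1 hu2 hu3 hu4 using hbump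
  obtain ⟨φ, hφ1, hφIcc, hφone, hφdisj⟩ := phi_exists u hu1 hu4
  have hφone' : ∀ k, ∀ x ∈ Fs k, φ k x = 1 := by
    intro k x hx
    apply hφone k x (hu2 k x hx)
    intro m hkm
    apply hu3 m
    rw [Finset.mem_biUnion]
    exact ⟨k, Finset.mem_range.2 hkm, hFsGs k hx⟩
  have hdisj' : ∀ x k, φ k x ≠ 0 → ∀ j, j ≠ k → φ j x = 0 := by
    intro x k hk j hj
    by_contra hjn
    rcases lt_or_gt_of_ne hj with h | h
    · exact hφdisj x j k h hjn hk
    · exact hφdisj x k j h hk hjn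
  -- interpolating continuous functions
  have hw : ∀ k, ∃ w : X → Y, Continuous w ∧ ∀ x ∈ Fs k, w x = t x := fun k => interp (Fs k) t
  choose w hw1 hw2 using hw
  -- continuous approximations of φ
  have hφapprox : ∀ k, ∃ g : ℕ → X → ℝ, (∀ M, Continuous (g M)) ∧
      ∀ x, Tendsto (fun M => g M x) atTop (𝓝 (φ k x)) := by
    intro k
    have hk := hφ1 k
    rw [bc_pos one_ne_zero] at hk
    obtain ⟨g, hg, hgt⟩ := hk
    refine ⟨g, fun M => ?_, hgt⟩
    rcases hg M with h | ⟨β, hβ, hmem⟩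
    · exact h
    · have hβ0 : β = 0 := Ordinal.lt_one_iff_zero.1 hβ
      subst hβ0
      rw [bc_zero] at hmem
      exact hmem
  choose gφ hgφc hgφt using hφapprox
  -- the partial sums
  set AN : ℕ → X → Y := fun N x => ∑ k ∈ Finset.range (N+1), φ k x • w k x with hANdef
  set PN : ℕ → X → ℝ := fun N x => ∑ k ∈ Finset.range (N+1), φ k x with hPNdef
  have hAN1 : ∀ N, AN N ∈ BaireClass X Y 1 := by
    intro N
    rw [bc_pos one_ne_zero]
    refine ⟨fun M x => ∑ k ∈ Finset.range (N+1), gφ k M x • w k x, fun M => Or.inl ?_,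
      fun x => ?_⟩
    · exact continuous_finset_sum _ fun k _ => ((hgφc k M).smul (hw1 k))
    · exact tendsto_finset_sum _ fun k _ => ((hgφt k x).smul tendsto_const_nhds)
  have hPN1 : ∀ N, PN N ∈ BaireClass X ℝ 1 := by
    intro N
    rw [bc_pos one_ne_zero]
    refine ⟨fun M x => ∑ k ∈ Finset.range (N+1), gφ k M x, fun M => Or.inl ?_, fun x => ?_⟩
    · exact continuous_finset_sum _ fun k _ => hgφc k M
    · exact tendsto_finset_sum _ fun k _ => hgφt k x
  -- stabilization of the partial sums
  have hstab : ∀ x, ∃ N0, ∀ N, N0 ≤ N → AN N x = AN N0 x ∧ PN N x = PN N0 x := by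
    intro x
    by_cases hex : ∃ k, φ k x ≠ 0
    · obtain ⟨k0, hk0⟩ := hex
      refine ⟨k0, fun N hN => ?_⟩
      have hsub : Finset.range (k0+1) ⊆ Finset.range (N+1) :=
        Finset.range_subset_range.2 (by omega)
      constructor
      · refine (Finset.sum_subset hsub ?_).symm
        intro j hjN hjk
        have : φ j x = 0 := by
          apply hdisj' x k0 hk0 j
          rw [Finset.mem_range] at hjN hjk
          omega
        rw [this, zero_smul]
      · refine (Finset.sum_subset hsub ?_).symm
        intro j hjN hjk
        apply hdisj' x k0 hk0 j
        rw [Finset.mem_range] at hjN hjk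
        omega
    · push_neg at hex
      refine ⟨0, fun N hN => ?_⟩
      constructor
      · rw [hANdef]
        simp only []
        rw [Finset.sum_eq_zero fun k _ => by rw [hex k, zero_smul],
          Finset.sum_eq_zero fun k _ => by rw [hex k, zero_smul]]
      · rw [hPNdef]
        simp only []
        rw [Finset.sum_eq_zero fun k _ => hex k, Finset.sum_eq_zero fun k _ => hex k]
  set A : X → Y := fun x => limUnder atTop (fun N => AN N x) with hAdef
  set P : X → ℝ := fun x => limUnder atTop (fun N => PN N x) with hPdef
  have hAt : ∀ x, Tendsto (fun N => AN N x) atTop (𝓝 (A x)) := by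
    intro x
    obtain ⟨N0, hN0⟩ := hstab x
    have h' : Tendsto (fun N => AN N x) atTop (𝓝 (AN N0 x)) :=
      tendsto_atTop_of_eventually_const fun N hN => (hN0 N hN).1
    have : A x = AN N0 x := h'.limUnder_eq
    rw [this]
    exact h'
  have hPt : ∀ x, Tendsto (fun N => PN N x) atTop (𝓝 (P x)) := by
    intro x
    obtain ⟨N0, hN0⟩ := hstab x
    have h' : Tendsto (fun N => PN N x) atTop (𝓝 (PN N0 x)) :=
      tendsto_atTop_of_eventually_const fun N hN => (hN0 N hN).2
    have : P x = PN N0 x := h'.limUnder_eq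
    rw [this]
    exact h'
  have hA2 : A ∈ BaireClass X Y 2 := by
    rw [bc_pos h20]
    exact ⟨fun N => AN N, fun N => Or.inr ⟨1, h12, hAN1 N⟩, hAt⟩
  have hP2 : P ∈ BaireClass X ℝ 2 := by
    rw [bc_pos h20]
    exact ⟨fun N => PN N, fun N => Or.inr ⟨1, h12, hPN1 N⟩, hPt⟩
  -- values on the sets Fs k
  have hAval : ∀ k, ∀ x ∈ Fs k, A x = t x := by
    intro k x hx
    have hφk : φ k x = 1 := hφone' k x hx
    have h' : ∀ N, k ≤ N → AN N x = t x := by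
      intro N hN
      rw [hANdef]
      simp only []
      rw [Finset.sum_eq_single_of_mem k (Finset.mem_range.2 (by omega))]
      · rw [hφk, one_smul, hw2 k x hx]
      · intro j hj hjk
        rw [hdisj' x k (by rw [hφk]; exact one_ne_zero) j hjk, zero_smul]
    exact tendsto_nhds_unique (hAt x)
      (tendsto_atTop_of_eventually_const fun N (hN : k ≤ N) => h' N hN)
  have hPval : ∀ k, ∀ x ∈ Fs k, P x = 1 := by
    intro k x hx
    have hφk : φ k x = 1 := hφone' k x hx
    have h' : ∀ N, k ≤ N → PN N x = 1 := by
      intro N hN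
      rw [hPNdef]
      simp only []
      rw [Finset.sum_eq_single_of_mem k (Finset.mem_range.2 (by omega))]
      · exact hφk
      · intro j hj hjk
        exact hdisj' x k (by rw [hφk]; exact one_ne_zero) j hjk
    exact tendsto_nhds_unique (hPt x)
      (tendsto_atTop_of_eventually_const fun N (hN : k ≤ N) => h' N hN)
  -- assembling the witness function
  obtain ⟨γ, hγ2, hF0γ, hγS⟩ := hmemS (F 0) (hFS 0)
  set hfun : X → Y := fun x => (F 0 x + (-P x) • F 0 x) + (1:ℝ) • A x with hhdef
  have hPγ : P ∈ BaireClass X ℝ γ := bc_mono hγ2 hP2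
  have hnegP : (fun x => -P x) ∈ BaireClass X ℝ γ := by
    have h' := bc_comb γ P (fun _ => (-1:ℝ)) (fun _ => (0:ℝ)) hPγ
      (bc_of_continuous continuous_const) (bc_of_continuous continuous_const)
    have he : (fun x => (0:ℝ) + P x • (-1:ℝ)) = fun x => -P x := by
      funext x
      simp [_root_.smul_eq_mul]
    rw [he] at h'
    exact h'
  have hs1 : (fun x => F 0 x + (-P x) • F 0 x) ∈ BaireClass X Y γ :=
    bc_comb γ (fun x => -P x) (F 0) (F 0) hnegP hF0γ hF0γ
  have hhγ : hfun ∈ BaireClass X Y γ :=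
    bc_comb γ (fun _ => (1:ℝ)) A (fun x => F 0 x + (-P x) • F 0 x)
      (bc_of_continuous continuous_const) (bc_mono hγ2 hA2) hs1
  have hhS : hfun ∈ S := hγS hhγ
  -- the distance estimates
  have hclaim : ∀ n, ∀ x ∈ Gs n, dist (hfun x) (F n x) < 2 * E n := by
    intro n x hx
    obtain ⟨k, hkn, hxk⟩ := hcover n x hx
    have hval : hfun x = t x := by
      rw [hhdef]
      simp only []
      rw [hPval k x hxk, hAval k x hxk]
      simp
    rw [hval]
    have h1 := htdist n x hx
    have h2 := hEpos n
    linarith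
  -- conclusion
  refine ⟨⟨hfun, hhS⟩, ?_, ?_⟩
  · apply hW0 hfun hhS
    intro x hx
    rw [← hbase1, ← hbase3]
    exact hclaim 0 x (by rw [hbase2]; exact hx)
  · rw [Set.mem_iInter]
    intro n
    exact hballn n hfun hhS fun x hx => hclaim (n+1) x hx

end Main

theorem statement10 {X : Type*} [TopologicalSpace X] [T35Space X]
    (Y : Type*) [AddCommGroup Y] [Module ℝ Y] [TopologicalSpace Y]
    (hY : IsFrechetTVS Y) (α : Ordinal.{0}) (hα2 : 2 ≤ α) (hα : α ≤ ω_ 1) :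
    BaireSpace ↥(BaireFun X Y α) := by
  obtain ⟨hadd, hsmul, _hlc, m, hm, hcomp⟩ := hY
  subst hm
  letI : MetricSpace Y := m
  haveI : CompleteSpace Y := hcomp
  haveI : IsTopologicalAddGroup Y := hadd
  haveI : ContinuousSMul ℝ Y := hsmul
  exact main_baire α hα2 hα
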